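/- Let K ⊂ R^d be a convex body in γ-canonical form for constant γ, and let ε > 0 be sufficiently small. There exists a set R of shrunken Macbeath regions M'(x) of K with δ(x) = ε such that: (i) for any v > 0, the number of regions in R of volume Θ(v) is O(ε/v), and (ii) every ray emanating from the origin intersects some region of R. -/

import Mathlib

open MeasureTheory Metric Set
open scoped Pointwise

/-- The Macbeath region `M^λ(x) = x + λ((K − x) ∩ (x − K))`. -/
noncomputable def Mreg {d : ℕ} (K : Set (EuclideanSpace ℝ (Fin d))) (lam : ℝ)
    (x : EuclideanSpace ℝ (Fin d)) : Set (EuclideanSpace ℝ (Fin d)) :=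
  (fun v => x + lam • v) '' ((K - {x}) ∩ ({x} - K))


section helpers

variable {d : ℕ}

/-- lower bound on infDist -/
lemma my_le_infDist {s : Set (EuclideanSpace ℝ (Fin d))} {x : EuclideanSpace ℝ (Fin d)} {r : ℝ}
    (hs : s.Nonempty) (h : ∀ y ∈ s, r ≤ dist x y) : r ≤ infDist x s := by
  rcases le_or_gt r 0 with hr | hr
  · exact hr.trans infDist_nonneg
  · rw [infDist, ← ENNReal.ofReal_le_iff_le_toReal (infEdist_ne_top hs),
      EMetric.le_infEdist]
    intro y hy
    rw [edist_dist]
    exact ENNReal.ofReal_le_ofReal (h y hy)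

/-- exit point of a segment from inside to outside a closed set -/
lemma exit_point {K : Set (EuclideanSpace ℝ (Fin d))} (hcl : IsClosed K)
    {x p : EuclideanSpace ℝ (Fin d)} (hx : x ∈ K) (hp : p ∉ K) :
    ∃ t ∈ Set.Icc (0:ℝ) 1, x + t • (p - x) ∈ frontier K ∧ dist x (x + t • (p - x)) ≤ dist x p := by
  set f : ℝ → EuclideanSpace ℝ (Fin d) := fun t => x + t • (p - x) with hf
  have hfc : Continuous f := by fun_prop
  set S : Set ℝ := Set.Icc (0:ℝ) 1 ∩ f ⁻¹' K with hS
  have hS0 : (0:ℝ) ∈ S := by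
    constructor
    · exact Set.left_mem_Icc.2 zero_le_one
    · simp only [Set.mem_preimage, hf]
      simpa using hx
  have hSc : IsClosed S := isClosed_Icc.inter (hcl.preimage hfc)
  have hSb : BddAbove S := BddAbove.mono (Set.inter_subset_left) (bddAbove_Icc)
  have hts : sSup S ∈ S := hSc.csSup_mem ⟨0, hS0⟩ hSb
  set t := sSup S with htdef
  have ht01 : t ∈ Set.Icc (0:ℝ) 1 := hts.1
  have htK : f t ∈ K := hts.2
  have ht1 : t < 1 := by
    rcases lt_or_eq_of_le ht01.2 with h | h
    · exact h
    · exfalso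
      apply hp
      have := htK
      rw [h] at this
      simpa [hf] using this
  refine ⟨t, ht01, ?_, ?_⟩
  · rw [frontier, Set.mem_diff]
    constructor
    · exact subset_closure htK
    · intro hint
      rcases Metric.isOpen_iff.1 isOpen_interior (f t) hint with ⟨r, hr, hball⟩
      -- pick t' slightly bigger
      have hcont : ContinuousAt f t := hfc.continuousAt
      rcases Metric.continuousAt_iff.1 hcont r hr with ⟨η, hη, hcl2⟩
      set t' := min 1 (t + η/2) with ht'
      have htt' : t < t' := by
        apply lt_min ht1
        linarith
      have hd : dist t' t < η := by
        rw [Real.dist_eq, abs_lt]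
        constructor
        · have h1 : (0:ℝ) ≤ t' := le_min zero_le_one (by linarith [ht01.1])
          linarith
        · have := min_le_right 1 (t + η/2)
          linarith
      have : f t' ∈ K := interior_subset (hball (hcl2 hd))
      have : t' ∈ S := ⟨⟨le_min zero_le_one (by linarith [ht01.1]), min_le_left _ _⟩, this⟩
      have := le_csSup hSb this
      linarith
  · have : dist x (f t) = t * dist x p := by
      simp only [hf, dist_eq_norm]
      rw [show x - (x + t • (p - x)) = t • (x - p) by module]
      rw [norm_smul, Real.norm_eq_abs, abs_of_nonneg ht01.1]
    rw [this]
    nlinarith [dist_nonneg (x := x) (y := p), ht01.1, ht01.2]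

/-- infDist to frontier equals infDist to complement, for points of a closed set -/
lemma infDist_frontier_eq {K : Set (EuclideanSpace ℝ (Fin d))} (hcl : IsClosed K)
    {x : EuclideanSpace ℝ (Fin d)} (hx : x ∈ K) (hne : Kᶜ.Nonempty) :
    infDist x (frontier K) = infDist x Kᶜ := by
  obtain ⟨p₀, hp₀⟩ := hne
  obtain ⟨t₀, _, hq₀, _⟩ := exit_point hcl hx hp₀
  apply le_antisymm
  · -- ≤ : for each p ∈ Kᶜ, there is frontier point within dist x p
    apply my_le_infDist ⟨p₀, hp₀⟩
    intro p hp
    obtain ⟨t, ht, hq, hd⟩ := exit_point hcl hx hp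
    exact (infDist_le_dist_of_mem hq).trans hd
  · rw [← infDist_closure (s := Kᶜ)]
    apply infDist_le_infDist_of_subset _ ⟨_, hq₀⟩
    rw [← frontier_compl]
    exact frontier_subset_closure

end helpers

section macbeath

variable {d : ℕ} {K : Set (EuclideanSpace ℝ (Fin d))} {lam : ℝ} {x y : EuclideanSpace ℝ (Fin d)}

lemma mem_Mreg : y ∈ Mreg K lam x ↔ ∃ v, (x + v ∈ K ∧ x - v ∈ K) ∧ y = x + lam • v := by
  unfold Mreg
  constructor
  · rintro ⟨v, ⟨hv1, hv2⟩, rfl⟩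
    refine ⟨v, ⟨?_, ?_⟩, rfl⟩
    · rcases hv1 with ⟨a, ha, b, hb, rfl⟩
      rw [Set.mem_singleton_iff] at hb
      subst hb
      convert ha using 1
      module
    · rcases hv2 with ⟨a, ha, b, hb, rfl⟩
      rw [Set.mem_singleton_iff] at ha
      subst ha
      convert hb using 1
      module
  · rintro ⟨v, ⟨hv1, hv2⟩, rfl⟩
    refine ⟨v, ⟨⟨x + v, hv1, x, rfl, by module⟩, ⟨x, rfl, x - v, hv2, by module⟩⟩, rfl⟩

end macbeath

section macbeath2

variable {d : ℕ} {K : Set (EuclideanSpace ℝ (Fin d))} {lam : ℝ} {x y : EuclideanSpace ℝ (Fin d)}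

lemma self_mem_Mreg (hx : x ∈ K) : x ∈ Mreg K lam x := by
  rw [mem_Mreg]
  exact ⟨0, ⟨by simpa using hx, by simpa using hx⟩, by simp⟩

lemma Mreg_subset_K (hK : Convex ℝ K) (hx : x ∈ K) (h0 : 0 ≤ lam) (h1 : lam ≤ 1) :
    Mreg K lam x ⊆ K := by
  intro y hy
  rw [mem_Mreg] at hy
  obtain ⟨v, ⟨hv1, _⟩, rfl⟩ := hy
  have := hK hx hv1 (by linarith : (0:ℝ) ≤ 1 - lam) h0 (by ring)
  convert this using 1
  module

lemma ball_subset_Mreg (h0 : 0 < lam) {r : ℝ} (hball : ball x r ⊆ K) :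
    ball x (lam * r) ⊆ Mreg K lam x := by
  intro y hy
  rw [mem_Mreg]
  refine ⟨lam⁻¹ • (y - x), ⟨?_, ?_⟩, ?_⟩
  · apply hball
    rw [mem_ball, dist_eq_norm]
    rw [show x + lam⁻¹ • (y - x) - x = lam⁻¹ • (y - x) by module]
    rw [norm_smul, Real.norm_eq_abs, abs_of_pos (inv_pos.2 h0)]
    rw [mem_ball, dist_eq_norm] at hy
    rw [show y - x = -(x - y) by module, norm_neg] at hy ⊢
    calc lam⁻¹ * ‖x - y‖ < lam⁻¹ * (lam * r) := by
          apply mul_lt_mul_of_pos_left _ (inv_pos.2 h0)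
          exact hy
      _ = r := by field_simp
  · apply hball
    rw [mem_ball, dist_eq_norm]
    rw [show x - lam⁻¹ • (y - x) - x = -(lam⁻¹ • (y - x)) by module, norm_neg]
    rw [norm_smul, Real.norm_eq_abs, abs_of_pos (inv_pos.2 h0)]
    rw [mem_ball, dist_eq_norm] at hy
    rw [show y - x = -(x - y) by module, norm_neg] at hy ⊢
    calc lam⁻¹ * ‖x - y‖ < lam⁻¹ * (lam * r) := by
          apply mul_lt_mul_of_pos_left _ (inv_pos.2 h0)
          exact hy
      _ = r := by field_simp
  · rw [smul_smul]
    field_simp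
    module

lemma Mreg_isCompact (hK : IsCompact K) : IsCompact (Mreg K lam x) := by
  unfold Mreg
  apply IsCompact.image _ (by fun_prop)
  apply IsCompact.inter_right
  · have : K - {x} = (fun a => a - x) '' K := by
      ext v
      simp [Set.sub_singleton]
    rw [this]
    exact hK.image (by fun_prop)
  · have : {x} - K = (fun a => x - a) '' K := by
      ext v
      simp [Set.singleton_sub]
    rw [this]
    exact (hK.image (by fun_prop)).isClosed

lemma volume_Mreg (h0 : 0 ≤ lam) :
    volume (Mreg K lam x) = ENNReal.ofReal (lam ^ d) * volume ((K - {x}) ∩ ({x} - K)) := by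
  unfold Mreg
  have : (fun v : EuclideanSpace ℝ (Fin d) => x + lam • v) = (fun u => x + u) ∘ (fun v => lam • v) := rfl
  rw [this, Set.image_comp]
  have h1 : (fun u => x + u) '' ((fun v => lam • v) '' ((K - {x}) ∩ ({x} - K)))
      = x +ᵥ ((fun v => lam • v) '' ((K - {x}) ∩ ({x} - K))) := by
    ext u
    simp only [Set.mem_image, Set.mem_vadd_set, vadd_eq_add]
  rw [h1, measure_vadd]
  have h2 : (fun v : EuclideanSpace ℝ (Fin d) => lam • v) '' ((K - {x}) ∩ ({x} - K))
      = lam • ((K - {x}) ∩ ({x} - K)) := rfl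
  rw [h2, Measure.addHaar_smul_of_nonneg volume h0]
  congr 2
  rw [finrank_euclideanSpace_fin]

end macbeath2

section keylemma

variable {d : ℕ} {K : Set (EuclideanSpace ℝ (Fin d))} {x y : EuclideanSpace ℝ (Fin d)}

lemma Mreg_inter_subset (hK : Convex ℝ K) (hx : x ∈ K) (hy : y ∈ K)
    (hint : (Mreg K (1/20) x ∩ Mreg K (1/20) y).Nonempty) :
    Mreg K (1/20) y ⊆ Mreg K (1/5) x := by
  obtain ⟨z, hz1, hz2⟩ := hint
  rw [mem_Mreg] at hz1 hz2
  obtain ⟨a, ⟨ha1, ha2⟩, hza⟩ := hz1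
  obtain ⟨b, ⟨hb1, hb2⟩, hzb⟩ := hz2
  have hrel : y = x + (1/20:ℝ) • a - (1/20:ℝ) • b := by
    rw [hza] at hzb
    have : x + (1/20:ℝ) • a - (1/20:ℝ) • b = y + (1/20:ℝ) • b - (1/20:ℝ) • b := by
      rw [← hzb]
    rw [this]
    module
  intro u hu
  rw [mem_Mreg] at hu ⊢
  obtain ⟨w, ⟨hw1, hw2⟩, huw⟩ := hu
  refine ⟨(1/4:ℝ) • (a - b + w), ⟨?_, ?_⟩, ?_⟩
  · -- x + v = (11/40)x + (1/40)y + (9/40)(x+a) + (9/40)(y-b) + (10/40)(y+w)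
    have hmem := hK.sum_mem (t := (Finset.univ : Finset (Fin 5)))
      (w := ![11/40, 1/40, 9/40, 9/40, 10/40]) (z := ![x, y, x + a, y - b, y + w])
      (fun i _ => by fin_cases i <;> norm_num)
      (by simp [Fin.sum_univ_five]; norm_num)
      (fun i _ => by
        fin_cases i
        · exact hx
        · exact hy
        · exact ha1
        · exact hb2
        · exact hw1)
    simp only [Fin.sum_univ_five, Matrix.cons_val_zero, Matrix.cons_val_one, Matrix.head_cons,
      Matrix.cons_val_two, Matrix.tail_cons, Matrix.cons_val_three, Matrix.cons_val_four] at hmem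
    convert hmem using 1
    rw [hrel]
    module
  · -- x - v = (3/32)x + (3/32)y + (9/32)(x-a) + (9/32)(y+b) + (8/32)(y-w)
    have hmem := hK.sum_mem (t := (Finset.univ : Finset (Fin 5)))
      (w := ![3/32, 3/32, 9/32, 9/32, 8/32]) (z := ![x, y, x - a, y + b, y - w])
      (fun i _ => by fin_cases i <;> norm_num)
      (by simp [Fin.sum_univ_five]; norm_num)
      (fun i _ => by
        fin_cases i
        · exact hx
        · exact hy
        · exact ha2
        · exact hb1
        · exact hw2)
    simp only [Fin.sum_univ_five, Matrix.cons_val_zero, Matrix.cons_val_one, Matrix.head_cons,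
      Matrix.cons_val_two, Matrix.tail_cons, Matrix.cons_val_three, Matrix.cons_val_four] at hmem
    convert hmem using 1
    rw [hrel]
    module
  · rw [huw, hrel]
    module

end keylemma

section slab

variable {d : ℕ} {K : Set (EuclideanSpace ℝ (Fin d))}

lemma infDist_le_of_mem_Mreg20 (hK : Convex ℝ K) (hcomp : IsCompact K)
    (hint : (interior K).Nonempty) (hne : Kᶜ.Nonempty)
    {x : EuclideanSpace ℝ (Fin d)} {ε : ℝ} (hx : x ∈ K) (hε : 0 < ε)
    (hδ : infDist x Kᶜ = ε) {y : EuclideanSpace ℝ (Fin d)}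
    (hy : y ∈ Mreg K (1/20) x) : infDist y Kᶜ ≤ (21/20) * ε := by
  have hcl : IsClosed K := hcomp.isClosed
  obtain ⟨p₀, hp₀⟩ := hne
  obtain ⟨t₀, _, hq₀, _⟩ := exit_point hcl hx hp₀
  have hfr_sub : frontier K ⊆ K := hcl.frontier_subset
  have hfrc : IsCompact (frontier K) := hcomp.of_isClosed_subset isClosed_frontier hfr_sub
  obtain ⟨z, hzfr, hdz⟩ := hfrc.exists_infDist_eq_dist ⟨_, hq₀⟩ x
  have hdist : dist x z = ε := by
    rw [← hdz, infDist_frontier_eq hcl hx ⟨p₀, hp₀⟩, hδ]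
  have hzint : z ∉ interior K := by
    rw [← closure_diff_interior] at hzfr
    exact hzfr.2
  obtain ⟨f, hf⟩ := geometric_hahn_banach_open_point hK.interior isOpen_interior hzint
  obtain ⟨a, haint⟩ := hint
  -- all of K is below f z
  have hKsub : K ⊆ closure (interior K) := by
    intro p hp
    set c : ℕ → ℝ := fun n => 1/(n+1) with hc
    have hc0 : Filter.Tendsto c Filter.atTop (nhds 0) := tendsto_one_div_add_atTop_nhds_zero_nat
    have hlim : Filter.Tendsto (fun n => c n • a + (1 - c n) • p) Filter.atTop
        (nhds ((0:ℝ) • a + (1 - (0:ℝ)) • p)) := by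
      exact (hc0.smul_const a).add ((tendsto_const_nhds.sub hc0).smul_const p)
    have hlim' : Filter.Tendsto (fun n => c n • a + (1 - c n) • p) Filter.atTop (nhds p) := by
      convert hlim using 2
      module
    apply mem_closure_of_tendsto hlim'
    apply Filter.Eventually.of_forall
    intro n
    apply hK.combo_interior_closure_mem_interior haint (subset_closure hp)
    · positivity
    · have : c n ≤ 1 := by
        rw [hc]
        simp only []
        rw [div_le_one (by positivity)]
        linarith [Nat.cast_nonneg (α := ℝ) n]
      linarith
    · ring
  have hfK : ∀ p ∈ K, f p ≤ f z := by
    intro p hp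
    have hsub2 : closure (interior K) ⊆ f ⁻¹' Set.Iic (f z) :=
      closure_minimal (fun q hq => le_of_lt (hf q hq)) (isClosed_Iic.preimage f.continuous)
    exact hsub2 (hKsub hp)
  have hfnz : f ≠ 0 := by
    intro h
    have := hf a haint
    rw [h] at this
    simp at this
  have hfnorm : 0 < ‖f‖ := by
    rwa [norm_pos_iff]
  have hfx : f z - f x ≤ ‖f‖ * ε := by
    have h1 : f z - f x = f (z - x) := by rw [map_sub]
    have h2 : f (z - x) ≤ |f (z - x)| := le_abs_self _
    have h3 : |f (z - x)| ≤ ‖f‖ * ‖z - x‖ := f.le_opNorm _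
    have h4 : ‖z - x‖ = ε := by rw [← dist_eq_norm, dist_comm, hdist]
    rw [h1]
    rw [h4] at h3
    linarith
  rw [mem_Mreg] at hy
  obtain ⟨v, ⟨hv1, hv2⟩, rfl⟩ := hy
  have hfv1 : f v ≤ ‖f‖ * ε := by
    have := hfK _ hv1
    rw [map_add] at this
    linarith
  have hfv2 : -(‖f‖ * ε) ≤ f v := by
    have := hfK _ hv2
    rw [map_sub] at this
    linarith
  have hfy : f z - (21/20) * ε * ‖f‖ ≤ f (x + (1/20:ℝ) • v) := by
    rw [map_add, f.map_smul]
    simp only [smul_eq_mul]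
    nlinarith
  -- move in direction of the dual vector
  apply le_of_forall_pos_le_add
  intro η hη
  set u := (InnerProductSpace.toDual ℝ (EuclideanSpace ℝ (Fin d))).symm f with hu
  have hunorm : ‖u‖ = ‖f‖ := (InnerProductSpace.toDual ℝ _).symm.norm_map f
  have hfu : f u = ‖f‖ ^ 2 := by
    have h1 : (inner ℝ u u : ℝ) = f u := InnerProductSpace.toDual_symm_apply
    rw [← h1, real_inner_self_eq_norm_sq, hunorm]
  set c : ℝ := ((21/20) * ε + η) * ‖f‖⁻¹ with hcdef
  have hcpos : 0 < c := by positivity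
  set p : EuclideanSpace ℝ (Fin d) := (x + (1/20:ℝ) • v) + c • u with hpdef
  have hfp : f z < f p := by
    rw [hpdef, map_add, f.map_smul]
    simp only [smul_eq_mul]
    rw [hfu]
    have : c * ‖f‖ ^ 2 = ((21/20) * ε + η) * ‖f‖ := by
      rw [hcdef]
      field_simp
    rw [this]
    nlinarith
  have hpK : p ∈ Kᶜ := by
    intro hpmem
    exact absurd (hfK p hpmem) (not_le.2 hfp)
  calc infDist (x + (1/20:ℝ) • v) Kᶜ ≤ dist (x + (1/20:ℝ) • v) p := infDist_le_dist_of_mem hpK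
    _ = ‖c • u‖ := by
        rw [dist_eq_norm, hpdef,
          show x + (1/20:ℝ) • v - (x + (1/20:ℝ) • v + c • u) = -(c • u) by module, norm_neg]
    _ = c * ‖f‖ := by
        rw [norm_smul, Real.norm_eq_abs, abs_of_pos hcpos, hunorm]
    _ = (21/20) * ε + η := by
        rw [hcdef]
        field_simp

end slab

section shellray

variable {d : ℕ} {K : Set (EuclideanSpace ℝ (Fin d))} {sγ : ℝ}

lemma infDist_ge_of_mem_smul (hK : Convex ℝ K) (hball : closedBall 0 sγ ⊆ K)
    (hsγ : 0 < sγ) {t : ℝ} (ht0 : 0 ≤ t) (ht1 : t < 1) {y : EuclideanSpace ℝ (Fin d)}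
    (hy : y ∈ t • K) (hne : Kᶜ.Nonempty) : (1 - t) * sγ ≤ infDist y Kᶜ := by
  obtain ⟨k, hk, rfl⟩ := hy
  apply my_le_infDist hne
  intro p hp
  by_contra hlt
  push_neg at hlt
  apply hp
  have h1t : 0 < 1 - t := by linarith
  have hb : (1-t)⁻¹ • (p - t • k) ∈ closedBall (0 : EuclideanSpace ℝ (Fin d)) sγ := by
    rw [mem_closedBall, dist_eq_norm, sub_zero, norm_smul, Real.norm_eq_abs,
      abs_of_pos (inv_pos.2 h1t)]
    rw [dist_eq_norm] at hlt
    rw [show t • k - p = -(p - t • k) by module, norm_neg] at hlt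
    calc (1-t)⁻¹ * ‖p - t • k‖ ≤ (1-t)⁻¹ * ((1-t) * sγ) :=
          mul_le_mul_of_nonneg_left hlt.le (inv_pos.2 h1t).le
      _ = sγ := by field_simp
  have := hK hk (hball hb) ht0 (le_of_lt h1t) (by ring)
  have heq : t • k + (1 - t) • ((1 - t)⁻¹ • (p - t • k)) = p := by
    rw [smul_smul, mul_inv_cancel₀ h1t.ne']
    module
  rwa [heq] at this

lemma ray_point (hK : Convex ℝ K) (hcl : IsClosed K) (hball : closedBall 0 sγ ⊆ K)
    {R : ℝ} (hsub : K ⊆ closedBall 0 R) (hsγ : 0 < sγ) (hR : 0 < R)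
    {w : EuclideanSpace ℝ (Fin d)} (hw : ‖w‖ = 1) {ε : ℝ} (hε : 0 < ε) (hεs : ε < sγ) :
    ∃ r : ℝ, 0 ≤ r ∧ r • w ∈ K ∧ infDist (r • w) Kᶜ = ε := by
  have h0K : (0 : EuclideanSpace ℝ (Fin d)) ∈ K := hball (by simp [hsγ.le])
  have hpK : (R + 1) • w ∉ K := by
    intro h
    have := hsub h
    rw [mem_closedBall, dist_zero_right, norm_smul, Real.norm_eq_abs, hw,
      abs_of_pos (by linarith)] at this
    linarith
  have hne : Kᶜ.Nonempty := ⟨_, hpK⟩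
  obtain ⟨t, ht01, hfr, _⟩ := exit_point hcl h0K hpK
  have hq : (t * (R + 1)) • w ∈ frontier K := by
    convert hfr using 1
    rw [← smul_smul]
    module
  set g : ℝ → ℝ := fun r => infDist (r • w) Kᶜ with hg
  have hgc : Continuous g :=
    (continuous_infDist_pt Kᶜ).comp (show Continuous fun r : ℝ => r • w by fun_prop)
  have hg0 : sγ ≤ g 0 := by
    apply my_le_infDist hne
    intro p hp
    rw [zero_smul, dist_comm, dist_zero_right]
    by_contra hc
    push_neg at hc
    exact hp (hball (by rw [mem_closedBall, dist_zero_right]; linarith))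
  have hgtop : g (t * (R + 1)) = 0 := by
    apply infDist_zero_of_mem_closure
    rw [← frontier_compl] at hq
    exact frontier_subset_closure hq
  have hc0 : 0 ≤ t * (R + 1) := mul_nonneg ht01.1 (by linarith)
  have hIVT := intermediate_value_Icc' hc0 (hgc.continuousOn)
  have hmem : ε ∈ Set.Icc (g (t * (R+1))) (g 0) := by
    rw [hgtop]
    exact ⟨hε.le, le_trans hεs.le hg0⟩
  obtain ⟨r, hr, hgr⟩ := hIVT hmem
  refine ⟨r, hr.1, ?_, hgr⟩
  by_contra h
  have : g r = 0 := infDist_zero_of_mem h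
  rw [hgr] at this
  linarith

end shellray

lemma one_sub_pow_le_nat {t : ℝ} (h0 : 0 ≤ t) (h1 : t ≤ 1) (n : ℕ) :
    1 - t ^ n ≤ n * (1 - t) := by
  induction n with
  | zero => simp
  | succ k ih =>
    have htk : t ^ k ≤ 1 := pow_le_one₀ h0 h1
    have htk0 : 0 ≤ t ^ k := pow_nonneg h0 k
    have : 1 - t ^ (k+1) = (1 - t) + t * (1 - t ^ k) := by ring
    rw [this]
    push_cast
    nlinarith


/-- For every constant `γ` (and constants `c₁ ≤ c₂` fixing the
meaning of "volume `Θ(v)`") there are constants `C > 0` and `ε₀ > 0` such that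
for every convex body `K` in `γ`-canonical form and every `0 < ε ≤ ε₀` there
is a finite set of shrunken Macbeath regions `M'(x i)` with `δ(x i) = ε` such
that (i) for any `v > 0` the number of regions of volume in `[c₁v, c₂v]` is at
most `C·ε/v`, and (ii) every ray emanating from the origin meets some region. -/
theorem stmt16 (d : ℕ) (γ c₁ c₂ : ℝ) (hγ0 : 0 < γ) (hγ1 : γ ≤ 1)
    (hc₁ : 0 < c₁) (hc₂ : c₁ ≤ c₂) :
    ∃ C > (0 : ℝ), ∃ ε₀ > (0 : ℝ),
      ∀ (K : Set (EuclideanSpace ℝ (Fin d))),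
        Convex ℝ K → IsCompact K → (interior K).Nonempty →
        closedBall (0 : EuclideanSpace ℝ (Fin d)) (Real.sqrt γ) ⊆ K →
        K ⊆ closedBall (0 : EuclideanSpace ℝ (Fin d)) (1 / Real.sqrt γ) →
        ∀ (ε : ℝ), 0 < ε → ε ≤ ε₀ →
        ∃ (n : ℕ) (x : Fin n → EuclideanSpace ℝ (Fin d)),
          (∀ i, x i ∈ K ∧ infDist (x i) (frontier K) = ε) ∧
          (∀ v : ℝ, 0 < v →
            ({i : Fin n | c₁ * v ≤ (volume (Mreg K (1/5) (x i))).toReal ∧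
                (volume (Mreg K (1/5) (x i))).toReal ≤ c₂ * v}.ncard : ℝ) ≤ C * ε / v) ∧
          (∀ w : EuclideanSpace ℝ (Fin d), ‖w‖ = 1 →
            ∃ i, ∃ s : ℝ, 0 ≤ s ∧ s • w ∈ Mreg K (1/5) (x i)) := by
  classical
  set sγ := Real.sqrt γ with hsγdef
  have hsγ : 0 < sγ := Real.sqrt_pos.2 hγ0
  have hsq : sγ * sγ = γ := Real.mul_self_sqrt hγ0.le
  have hsγ1 : sγ ≤ 1 := by nlinarith
  have hγsγ : γ ≤ sγ := by nlinarith
  set Vbar := (volume (closedBall (0 : EuclideanSpace ℝ (Fin d)) (1/sγ))).toReal with hVbar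
  have hVbar0 : 0 ≤ Vbar := ENNReal.toReal_nonneg
  set C := max 1 (3 * d * 4^d * Vbar / (sγ * c₁)) with hC
  have hC0 : (0:ℝ) < C := lt_of_lt_of_le one_pos (le_max_left _ _)
  refine ⟨C, hC0, γ/4, by positivity, ?_⟩
  intro K hK hcomp hint hball hsub ε hε hεε₀
  rcases Nat.eq_zero_or_pos d with hd | hd
  · -- dimension 0 : trivial
    subst hd
    refine ⟨0, Fin.elim0, fun i => i.elim0, fun v hv => ?_, fun w hw => ?_⟩
    · have he : {i : Fin 0 | c₁ * v ≤ (volume (Mreg K (1/5) (Fin.elim0 i))).toReal ∧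
          (volume (Mreg K (1/5) (Fin.elim0 i))).toReal ≤ c₂ * v} = ∅ :=
        Set.eq_empty_of_isEmpty _
      rw [he, Set.ncard_empty]
      simp only [Nat.cast_zero]
      positivity
    · exfalso
      have : ‖w‖ = 0 := by
        rw [EuclideanSpace.norm_eq]
        simp
      rw [hw] at this
      norm_num at this
  -- main case
  have hcl : IsClosed K := hcomp.isClosed
  have h0K : (0 : EuclideanSpace ℝ (Fin d)) ∈ K := hball (by simp [hsγ.le])
  have hεsγ : ε < sγ := by nlinarith
  have hne : Kᶜ.Nonempty := by
    refine ⟨EuclideanSpace.single ⟨0, hd⟩ (1/sγ + 1), fun h => ?_⟩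
    have := hsub h
    rw [mem_closedBall, dist_zero_right, EuclideanSpace.norm_single, Real.norm_eq_abs,
      abs_of_pos (by positivity)] at this
    linarith
  set Sε : Set (EuclideanSpace ℝ (Fin d)) := {z | z ∈ K ∧ infDist z Kᶜ = ε} with hSε
  have hballK : ∀ z ∈ Sε, ball z ε ⊆ K := by
    rintro z ⟨hzK, hzd⟩ p hp
    by_contra hpK
    have h1 := infDist_le_dist_of_mem (x := z) (show p ∈ Kᶜ from hpK)
    rw [hzd] at h1
    rw [mem_ball, dist_comm] at hp
    linarith
  have hUball : ∀ z ∈ Sε, ball z ((1/20) * ε) ⊆ Mreg K (1/20) z := fun z hz =>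
    ball_subset_Mreg (by norm_num) (hballK z hz)
  have hUsubK : ∀ z ∈ Sε, Mreg K (1/20) z ⊆ K := fun z hz =>
    Mreg_subset_K hK hz.1 (by norm_num) (by norm_num)
  have hM'subK : ∀ z ∈ Sε, Mreg K (1/5) z ⊆ K := fun z hz =>
    Mreg_subset_K hK hz.1 (by norm_num) (by norm_num)
  have hUmeas : ∀ z : EuclideanSpace ℝ (Fin d), MeasurableSet (Mreg K (1/20) z) := fun z =>
    (Mreg_isCompact hcomp).measurableSet
  have hKfin : volume K ≠ ⊤ := hcomp.measure_lt_top.ne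
  set α := volume (ball (0 : EuclideanSpace ℝ (Fin d)) ((1/20) * ε)) with hα
  have hα0 : 0 < α := measure_ball_pos _ _ (by positivity)
  have hαfin : α ≠ ⊤ := measure_ball_lt_top.ne
  have hαU : ∀ z ∈ Sε, α ≤ volume (Mreg K (1/20) z) := by
    intro z hz
    calc α = volume (ball z ((1/20) * ε)) := (Measure.addHaar_ball_center volume z _).symm
      _ ≤ _ := measure_mono (hUball z hz)
  -- the family of finite packings
  set 𝒮 : Set (Finset (EuclideanSpace ℝ (Fin d))) :=
    {P | ↑P ⊆ Sε ∧ (↑P : Set (EuclideanSpace ℝ (Fin d))).Pairwise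
        fun a b => Disjoint (Mreg K (1/20) a) (Mreg K (1/20) b)} with h𝒮
  have hvol_sum : ∀ P ∈ 𝒮, (P.card : ENNReal) * α ≤ volume K := by
    intro P hP
    have hdisj : (↑P : Set (EuclideanSpace ℝ (Fin d))).PairwiseDisjoint
        fun z => Mreg K (1/20) z := hP.2
    calc (P.card : ENNReal) * α = ∑ _z ∈ P, α := by
          rw [Finset.sum_const, nsmul_eq_mul]
      _ ≤ ∑ z ∈ P, volume (Mreg K (1/20) z) :=
          Finset.sum_le_sum (fun z hz => hαU z (hP.1 hz))
      _ = volume (⋃ z ∈ P, Mreg K (1/20) z) :=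
          (measure_biUnion_finset hdisj (fun z _ => hUmeas z)).symm
      _ ≤ volume K := measure_mono (Set.iUnion₂_subset fun z hz => hUsubK z (hP.1 hz))
  have hcardbd : ∀ P ∈ 𝒮, P.card ≤ Nat.ceil ((volume K).toReal / α.toReal) := by
    intro P hP
    have h1 := hvol_sum P hP
    have hα0' : 0 < α.toReal := ENNReal.toReal_pos hα0.ne' hαfin
    have h2 : (P.card : ℝ) * α.toReal ≤ (volume K).toReal := by
      have h2' : ((P.card : ENNReal) * α).toReal ≤ (volume K).toReal :=
        ENNReal.toReal_mono hKfin h1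
      rwa [ENNReal.toReal_mul, ENNReal.toReal_natCast] at h2'
    have h3 : (P.card : ℝ) ≤ (volume K).toReal / α.toReal := by
      rw [le_div_iff₀ hα0']
      exact h2
    exact_mod_cast h3.trans (Nat.le_ceil _)
  -- a maximal packing
  have hA : (Finset.card '' 𝒮).Nonempty := ⟨0, ∅, ⟨by simp, by simp⟩, Finset.card_empty⟩
  have hAbdd : BddAbove (Finset.card '' 𝒮) := by
    refine ⟨Nat.ceil ((volume K).toReal / α.toReal), ?_⟩
    rintro m ⟨P, hP, rfl⟩
    exact hcardbd P hP
  obtain ⟨P, hP𝒮, hPcard⟩ := Nat.sSup_mem hA hAbdd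
  have hmax : ∀ Q ∈ 𝒮, Q.card ≤ P.card := by
    intro Q hQ
    rw [hPcard]
    exact le_csSup hAbdd ⟨Q, hQ, rfl⟩
  set n := P.card with hn
  set x : Fin n → EuclideanSpace ℝ (Fin d) := fun i => (P.equivFin.symm i : EuclideanSpace ℝ (Fin d)) with hxdef
  have hx_mem : ∀ i, x i ∈ P := fun i => (P.equivFin.symm i).2
  have hx_Sε : ∀ i, x i ∈ Sε := fun i => hP𝒮.1 (hx_mem i)
  have hx_surj : ∀ z ∈ P, ∃ i, x i = z := fun z hz => ⟨P.equivFin ⟨z, hz⟩, by simp [hxdef]⟩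
  have hx_inj : Function.Injective x := by
    intro i j h
    have := Subtype.coe_injective h
    exact P.equivFin.symm.injective this
  refine ⟨n, x, ?_, ?_, ?_⟩
  · intro i
    obtain ⟨hiK, hid⟩ := hx_Sε i
    exact ⟨hiK, by rw [infDist_frontier_eq hcl hiK hne]; exact hid⟩
  · -- counting
    intro v hv
    set T : Set (Fin n) := {i | c₁ * v ≤ (volume (Mreg K (1/5) (x i))).toReal ∧
        (volume (Mreg K (1/5) (x i))).toReal ≤ c₂ * v} with hT
    set F : Finset (Fin n) := T.toFinset with hF
    have hncard : T.ncard = F.card := Set.ncard_eq_toFinset_card' T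
    have hvolrel : ∀ i : Fin n, (volume (Mreg K (1/20) (x i))).toReal
        = (1/4:ℝ)^d * (volume (Mreg K (1/5) (x i))).toReal := by
      intro i
      rw [volume_Mreg (by norm_num), volume_Mreg (by norm_num)]
      rw [ENNReal.toReal_mul, ENNReal.toReal_mul, ENNReal.toReal_ofReal (by positivity),
        ENNReal.toReal_ofReal (by positivity)]
      rw [show (1/20:ℝ) = (1/4) * (1/5) by norm_num, mul_pow]
      ring
    -- shell containment
    set t : ℝ := 1 - 3 * ε / sγ with ht
    have hεγ4 : ε ≤ γ / 4 := hεε₀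
    have hγdivsγ : γ / sγ = sγ := by
      field_simp
      linarith [hsq]
    have ht14 : (1/4:ℝ) ≤ t := by
      rw [ht]
      have h1 : 3 * ε / sγ ≤ 3 * (γ/4) / sγ := by gcongr
      have h2 : 3 * (γ/4) / sγ = (3/4) * (γ / sγ) := by ring
      rw [h2, hγdivsγ] at h1
      nlinarith
    have ht1 : t < 1 := by
      rw [ht]
      have : 0 < 3 * ε / sγ := by positivity
      linarith
    have ht0 : 0 ≤ t := le_trans (by norm_num) ht14
    have hshell : ∀ i : Fin n, Mreg K (1/20) (x i) ⊆ K \ (t • K) := by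
      intro i y hy
      obtain ⟨hiK, hid⟩ := hx_Sε i
      refine ⟨hUsubK _ (hx_Sε i) hy, ?_⟩
      intro hytK
      have hge := infDist_ge_of_mem_smul hK hball hsγ ht0 ht1 hytK hne
      have hle := infDist_le_of_mem_Mreg20 hK hcomp hint hne hiK hε hid hy
      have h1t : (1 - t) * sγ = 3 * ε := by
        rw [ht]
        field_simp
        ring
      rw [h1t] at hge
      linarith
    have htKsub : t • K ⊆ K := by
      rintro - ⟨k, hk, rfl⟩
      have := hK h0K hk (by linarith : (0:ℝ) ≤ 1 - t) ht0 (by ring)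
      convert this using 1
      module
    have htKmeas : MeasurableSet (t • K) := by
      rw [← Set.image_smul]
      exact (hcomp.image (continuous_const_smul t)).measurableSet
    have hvoltK : volume (t • K) = ENNReal.ofReal (t^d) * volume K := by
      rw [Measure.addHaar_smul_of_nonneg volume ht0, finrank_euclideanSpace_fin]
    have hshellvol : (volume (K \ t • K)).toReal ≤ 3 * d * ε * Vbar / sγ := by
      have hdiff : volume (K \ t • K) = volume K - volume (t • K) :=
        measure_diff htKsub htKmeas.nullMeasurableSet
          (((measure_mono htKsub).trans_lt hcomp.measure_lt_top).ne)
      rw [hdiff, hvoltK]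
      rw [ENNReal.toReal_sub_of_le (by
          calc ENNReal.ofReal (t^d) * volume K ≤ 1 * volume K := by
                gcongr
                exact ENNReal.ofReal_le_one.2 (pow_le_one₀ ht0 ht1.le)
            _ = volume K := one_mul _) hKfin]
      rw [ENNReal.toReal_mul, ENNReal.toReal_ofReal (by positivity)]
      have hVK : (volume K).toReal ≤ Vbar := by
        rw [hVbar]
        exact ENNReal.toReal_mono (measure_closedBall_lt_top).ne (measure_mono hsub)
      have h1td : 1 - t^d ≤ d * (1 - t) := one_sub_pow_le_nat ht0 ht1.le d
      have hVK0 : 0 ≤ (volume K).toReal := ENNReal.toReal_nonneg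
      have h1t' : 1 - t = 3 * ε / sγ := by rw [ht]; ring
      have h1t0 : (0:ℝ) ≤ 1 - t := by linarith
      calc (volume K).toReal - t^d * (volume K).toReal
          = (1 - t^d) * (volume K).toReal := by ring
        _ ≤ (d * (1-t)) * (volume K).toReal :=
            mul_le_mul_of_nonneg_right h1td hVK0
        _ ≤ (d * (1-t)) * Vbar := by
            apply mul_le_mul_of_nonneg_left hVK
            positivity
        _ = 3 * d * ε * Vbar / sγ := by rw [h1t']; ring
    rw [hncard]
    have hUfin : ∀ i : Fin n, volume (Mreg K (1/20) (x i)) ≠ ⊤ := fun i =>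
      ((measure_mono (hUsubK _ (hx_Sε i))).trans_lt hcomp.measure_lt_top).ne
    have hlow : ∀ i ∈ F, (1/4:ℝ)^d * (c₁ * v) ≤ (volume (Mreg K (1/20) (x i))).toReal := by
      intro i hi
      rw [Set.mem_toFinset] at hi
      rw [hvolrel i]
      exact mul_le_mul_of_nonneg_left hi.1 (by positivity)
    have hdisjF : (↑F : Set (Fin n)).PairwiseDisjoint (fun i => Mreg K (1/20) (x i)) := by
      intro i _ j _ hij
      exact hP𝒮.2 (hx_mem i) (hx_mem j) (fun h => hij (hx_inj h))
    have hsum : (F.card : ℝ) * ((1/4:ℝ)^d * (c₁ * v)) ≤ 3 * d * ε * Vbar / sγ := by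
      calc (F.card : ℝ) * ((1/4:ℝ)^d * (c₁ * v))
          ≤ ∑ i ∈ F, (volume (Mreg K (1/20) (x i))).toReal := by
            have := Finset.card_nsmul_le_sum F _ _ hlow
            rwa [nsmul_eq_mul] at this
        _ = (∑ i ∈ F, volume (Mreg K (1/20) (x i))).toReal :=
            (ENNReal.toReal_sum (fun i _ => hUfin i)).symm
        _ = (volume (⋃ i ∈ F, Mreg K (1/20) (x i))).toReal := by
            rw [measure_biUnion_finset hdisjF (fun i _ => hUmeas _)]
        _ ≤ (volume (K \ t • K)).toReal := by
            apply ENNReal.toReal_mono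
              (((measure_mono Set.diff_subset).trans_lt hcomp.measure_lt_top).ne)
            exact measure_mono (Set.iUnion₂_subset fun i _ => hshell i)
        _ ≤ 3 * d * ε * Vbar / sγ := hshellvol
    have hAv : (F.card : ℝ) * v ≤ 3 * d * ε * Vbar / sγ * (4^d / c₁) := by
      have h2 : (F.card : ℝ) * v * ((1/4:ℝ)^d * c₁) ≤ 3 * d * ε * Vbar / sγ := by
        calc (F.card : ℝ) * v * ((1/4:ℝ)^d * c₁)
            = (F.card : ℝ) * ((1/4:ℝ)^d * (c₁ * v)) := by ring
          _ ≤ _ := hsum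
      have h14 : ((1/4:ℝ)^d * c₁) * (4^d / c₁) = 1 := by
        rw [show (1/4:ℝ)^d * c₁ * (4^d / c₁) = ((1/4:ℝ)^d * 4^d) * (c₁ / c₁) by ring,
          ← mul_pow]
        norm_num
        exact hc₁.ne'
      calc (F.card:ℝ) * v = (F.card:ℝ) * v * (((1/4:ℝ)^d * c₁) * (4^d/c₁)) := by rw [h14]; ring
        _ = ((F.card:ℝ) * v * ((1/4:ℝ)^d * c₁)) * (4^d/c₁) := by ring
        _ ≤ (3 * d * ε * Vbar / sγ) * (4^d/c₁) :=
            mul_le_mul_of_nonneg_right h2 (by positivity)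
    rw [le_div_iff₀ hv]
    have hXε : 3 * d * ε * Vbar / sγ * (4^d / c₁) = (3 * d * 4^d * Vbar / (sγ * c₁)) * ε := by
      field_simp
    have hCX : (3 * (d:ℝ) * 4^d * Vbar / (sγ * c₁)) ≤ C := le_max_right _ _
    have hfin : (F.card : ℝ) * v ≤ C * ε := by
      rw [hXε] at hAv
      calc (F.card : ℝ) * v ≤ (3 * (d:ℝ) * 4^d * Vbar / (sγ * c₁)) * ε := hAv
        _ ≤ C * ε := mul_le_mul_of_nonneg_right hCX hε.le
    exact hfin
  · -- rays
    intro w hw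
    obtain ⟨r, hr0, hrK, hrd⟩ := ray_point hK hcl hball hsub hsγ (by positivity) hw hε hεsγ
    have hySε : r • w ∈ Sε := ⟨hrK, hrd⟩
    by_cases hyP : r • w ∈ P
    · obtain ⟨i, hi⟩ := hx_surj _ hyP
      exact ⟨i, r, hr0, by rw [hi]; exact self_mem_Mreg hrK⟩
    · have hzex : ∃ z ∈ P, ¬ Disjoint (Mreg K (1/20) z) (Mreg K (1/20) (r • w)) := by
        by_contra hcon
        push_neg at hcon
        have hQ : insert (r • w) P ∈ 𝒮 := by
          constructor
          · rw [Finset.coe_insert]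
            exact Set.insert_subset hySε hP𝒮.1
          · rw [Finset.coe_insert]
            rw [Set.pairwise_insert]
            exact ⟨hP𝒮.2, fun b hb _ => ⟨(hcon b hb).symm, hcon b hb⟩⟩
        have := hmax _ hQ
        rw [Finset.card_insert_of_notMem hyP] at this
        omega
      obtain ⟨z, hzP, hzd⟩ := hzex
      have hinter := Set.not_disjoint_iff_nonempty_inter.1 hzd
      have hsubM := Mreg_inter_subset hK (hP𝒮.1 hzP).1 hrK hinter
      obtain ⟨i, hi⟩ := hx_surj z hzP
      refine ⟨i, r, hr0, ?_⟩
      rw [hi]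
      exact hsubM (self_mem_Mreg hrK)
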